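/- The dual volume LP infimum is not attained: every continuous function w : B → ℝ with w(x) ≥ 0 for all x ∈ B and w(x) ≥ 1 for all x ∈ K satisfies ∫_B w dλ > λ(K). -/

import Mathlib

open MeasureTheory Set Filter Topology

/-- Auxiliary: if `G` is differentiable at `x₀` with nonzero gradient and `G x₀ = 0`,
then there are points arbitrarily close to `x₀` where `G` is negative. -/
lemma exists_near_neg {n : ℕ} (G : EuclideanSpace ℝ (Fin n) → ℝ)
    (x₀ : EuclideanSpace ℝ (Fin n))
    (hd : DifferentiableAt ℝ G x₀) (hv : gradient G x₀ ≠ 0) (h0 : G x₀ = 0)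
    (r : ℝ) (hr : 0 < r) :
    ∃ x, dist x x₀ < r ∧ G x < 0 := by
  set v := gradient G x₀ with hvdef
  have hg : HasGradientAt G v x₀ := hd.hasGradientAt
  have hF : HasFDerivAt G ((InnerProductSpace.toDual ℝ _) v) x₀ :=
    hasGradientAt_iff_hasFDerivAt.mp hg
  set u := -v
  have hφ : HasDerivAt (fun t : ℝ => x₀ + t • u) u 0 := by
    simpa using ((hasDerivAt_id (0:ℝ)).smul_const u).const_add x₀
  have hcomp : HasDerivAt (fun t : ℝ => G (x₀ + t • u)) ((inner ℝ v u : ℝ)) 0 := by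
    have hF' : HasFDerivAt G ((InnerProductSpace.toDual ℝ _) v) (x₀ + (0:ℝ) • u) := by
      simpa using hF
    have := hF'.comp_hasDerivAt 0 hφ
    simp only [InnerProductSpace.toDual_apply_apply] at this
    exact this
  have hneg : ((inner ℝ v u : ℝ)) < 0 := by
    simp only [u, inner_neg_right, real_inner_self_eq_norm_sq]
    have : 0 < ‖v‖ := norm_pos_iff.mpr hv
    nlinarith
  have hslope := hasDerivAt_iff_tendsto_slope.mp hcomp
  have hsl : Tendsto (slope (fun t : ℝ => G (x₀ + t • u)) 0) (𝓝[>] 0) (𝓝 ((inner ℝ v u : ℝ))) :=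
    hslope.mono_left (nhdsWithin_mono _ (fun t ht => ne_of_gt ht))
  have hev : ∀ᶠ t in 𝓝[>] (0:ℝ), slope (fun t : ℝ => G (x₀ + t • u)) 0 t < 0 :=
    hsl.eventually (eventually_lt_nhds hneg)
  have hsmall : ∀ᶠ t in 𝓝[>] (0:ℝ), t * ‖u‖ < r := by
    apply eventually_nhdsWithin_of_eventually_nhds
    have : Tendsto (fun t : ℝ => t * ‖u‖) (𝓝 0) (𝓝 (0 * ‖u‖)) :=
      (continuous_id.mul continuous_const).tendsto 0
    simpa using this.eventually (eventually_lt_nhds (by simpa using hr))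
  obtain ⟨t, ⟨hts, htr⟩, htpos⟩ := ((hev.and hsmall).and self_mem_nhdsWithin).exists
  replace htpos : (0:ℝ) < t := htpos
  refine ⟨x₀ + t • u, ?_, ?_⟩
  · have : dist (x₀ + t • u) x₀ = ‖t • u‖ := by
      simp [dist_eq_norm]
    rw [this, norm_smul]
    have : |t| = t := abs_of_pos htpos
    rw [Real.norm_eq_abs, this]
    exact htr
  · have := hts
    rw [slope_def_field] at this
    simp only [sub_zero, zero_smul, add_zero, h0] at this
    have := (div_neg_iff).mp this
    rcases this with ⟨h1, h2⟩ | ⟨h1, h2⟩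
    · linarith [htpos]
    · exact h1

/-- the dual volume LP infimum is not attained: every feasible continuous `w`
has integral strictly larger than `λ(K)`. -/
theorem dual_volume_LP_not_attained
    (n : ℕ) (hn : 1 ≤ n)
    (g : MvPolynomial (Fin n) ℝ)
    (G : EuclideanSpace ℝ (Fin n) → ℝ)
    (hG : ∀ x, G x = MvPolynomial.eval (fun i => x i) g)
    (K Ω : Set (EuclideanSpace ℝ (Fin n)))
    (hK : K = {x | 0 ≤ G x})
    (hΩ : Ω = {x | 0 < G x})
    (hKcpt : IsCompact K)
    (hΩne : Ω.Nonempty)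
    (hΩopen : IsOpen Ω)
    (hclos : closure Ω = K)
    (hfront : frontier Ω = frontier K)
    (hfrontK : frontier K = {x ∈ K | G x = 0})
    (hfrontne : (frontier K).Nonempty)
    (hgradne : ∀ x ∈ frontier Ω, gradient G x ≠ 0)
    (B : Set (EuclideanSpace ℝ (Fin n)))
    (hBcpt : IsCompact B) (hKB : K ⊆ interior B)
    (w : EuclideanSpace ℝ (Fin n) → ℝ)
    (hw : ContinuousOn w B)
    (hwpos : ∀ x ∈ B, 0 ≤ w x)
    (hwK : ∀ x ∈ K, 1 ≤ w x) :
    (volume K).toReal < ∫ x in B, w x := by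
  -- G is differentiable (it is a polynomial), hence continuous
  have hGdiff : ∀ x, DifferentiableAt ℝ G x := by
    intro x₀
    have h : ∀ i, AnalyticAt ℝ (fun x : EuclideanSpace ℝ (Fin n) => x i) x₀ := fun i =>
      (EuclideanSpace.proj i : EuclideanSpace ℝ (Fin n) →L[ℝ] ℝ).analyticAt x₀
    have h2 := (AnalyticAt.aeval_mvPolynomial h g).differentiableAt
    have heq : (fun x : EuclideanSpace ℝ (Fin n) => (MvPolynomial.aeval fun i => x i) g) = G := by
      funext x
      rw [hG x, MvPolynomial.aeval_def, MvPolynomial.eval]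
      rfl
    rwa [heq] at h2
  have hGcont : Continuous G := by
    rw [continuous_iff_continuousAt]; exact fun x => (hGdiff x).continuousAt
  -- pick a boundary point
  obtain ⟨x₀, hx₀⟩ := hfrontne
  have hx₀' : x₀ ∈ {x ∈ K | G x = 0} := hfrontK ▸ hx₀
  have hx₀K : x₀ ∈ K := hx₀'.1
  have hGx₀ : G x₀ = 0 := hx₀'.2
  have hgrad : gradient G x₀ ≠ 0 := hgradne x₀ (by rw [hfront]; exact hx₀)
  -- w is continuous at x₀ and w x₀ ≥ 1
  have hBnhds : B ∈ 𝓝 x₀ := mem_nhds_iff.mpr ⟨interior B, interior_subset, isOpen_interior, hKB hx₀K⟩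
  have hwcont : ContinuousAt w x₀ := (hw x₀ (interior_subset (hKB hx₀K))).continuousAt hBnhds
  have hwhalf : ∀ᶠ x in 𝓝 x₀, (1:ℝ)/2 < w x :=
    hwcont.eventually (eventually_gt_nhds (by linarith [hwK x₀ hx₀K]))
  -- neighbourhood within interior B
  have hintB : interior B ∈ 𝓝 x₀ := isOpen_interior.mem_nhds (hKB hx₀K)
  obtain ⟨r, hrpos, hrball⟩ := Metric.mem_nhds_iff.mp (inter_mem hwhalf hintB)
  -- the set S of nearby points with G < 0
  set S : Set (EuclideanSpace ℝ (Fin n)) := Metric.ball x₀ r ∩ {x | G x < 0} with hSdef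
  have hSopen : IsOpen S := Metric.isOpen_ball.inter (isOpen_lt hGcont continuous_const)
  have hSne : S.Nonempty := by
    obtain ⟨x, hx1, hx2⟩ := exists_near_neg G x₀ (hGdiff x₀) hgrad hGx₀ r hrpos
    exact ⟨x, Metric.mem_ball.mpr hx1, hx2⟩
  have hSpos : 0 < volume S := hSopen.measure_pos volume hSne
  have hSfin : volume S < ⊤ :=
    lt_of_le_of_lt (measure_mono (inter_subset_left)) measure_ball_lt_top
  have hSB : S ⊆ B := fun x hx => interior_subset (hrball hx.1).2
  have hShalf : ∀ x ∈ S, (1:ℝ)/2 ≤ w x := fun x hx => le_of_lt (hrball hx.1).1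
  have hKB' : K ⊆ B := hKB.trans interior_subset
  have hKS : Disjoint K S := by
    refine Set.disjoint_left.mpr fun x hxK hxS => ?_
    have h1 : 0 ≤ G x := by rw [hK] at hxK; exact hxK
    exact absurd hxS.2 (not_lt.mpr h1)
  -- integrability
  have hKmeas : MeasurableSet K := hKcpt.isClosed.measurableSet
  have hBmeas : MeasurableSet B := hBcpt.isClosed.measurableSet
  have hSmeas : MeasurableSet S := hSopen.measurableSet
  have hInt : IntegrableOn w B := hw.integrableOn_compact hBcpt
  have hIntK : IntegrableOn w K := hInt.mono_set hKB'
  have hIntS : IntegrableOn w S := hInt.mono_set hSB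
  -- chain of inequalities
  have step1 : ∫ x in K ∪ S, w x ≤ ∫ x in B, w x := by
    refine setIntegral_mono_set hInt ?_ ?_
    · exact (ae_restrict_iff' hBmeas).mpr (ae_of_all _ hwpos)
    · exact HasSubset.Subset.eventuallyLE (union_subset hKB' hSB)
  have step2 : ∫ x in K ∪ S, w x = (∫ x in K, w x) + ∫ x in S, w x :=
    setIntegral_union hKS hSmeas hIntK hIntS
  have step3 : (volume K).toReal ≤ ∫ x in K, w x := by
    have h1 : ∫ x in K, (1:ℝ) = (volume K).toReal := by
      rw [setIntegral_const]; simp; rfl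
    rw [← h1]
    refine setIntegral_mono_on ?_ hIntK hKmeas (fun x hx => hwK x hx)
    exact (integrableOn_const_iff).mpr (Or.inr hKcpt.measure_lt_top)
  have step4 : 0 < ∫ x in S, w x := by
    have h1 : ∫ x in S, (1:ℝ)/2 = (volume S).toReal * (1/2) := by
      rw [setIntegral_const]; simp [smul_eq_mul]; rfl
    have h2 : (0:ℝ) < (volume S).toReal * (1/2) := by
      have : 0 < (volume S).toReal := ENNReal.toReal_pos hSpos.ne' hSfin.ne
      linarith
    have h3 : ∫ x in S, (1:ℝ)/2 ≤ ∫ x in S, w x := by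
      refine setIntegral_mono_on ?_ hIntS hSmeas hShalf
      exact (integrableOn_const_iff).mpr (Or.inr hSfin)
    linarith [h1 ▸ h3]
  calc (volume K).toReal ≤ ∫ x in K, w x := step3
    _ < (∫ x in K, w x) + ∫ x in S, w x := by linarith
    _ = ∫ x in K ∪ S, w x := step2.symm
    _ ≤ ∫ x in B, w x := step1
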